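/- Let Q be an atomic modular quantale, i.e. Q = P(X) as a complete lattice for some set X, with the quantale structure. Let E = {x ∈ X | {x} ≤ 1}. Then for every atom q ∈ X there exists a unique e ∈ E such that {e}·{q} = {q}. -/
import Mathlib


/-- In an atomic modular quantale `P(X)` (power-set complete lattice with a bilinear
associative unital multiplication, order-preserving product-reversing involution and the
modularity law), with `E = {x | {x} ≤ 1}`, every atom `{q}` admits a unique `e ∈ E`
with `{e}·{q} = {q}`. -/
theorem stmt12 (X : Type*) (mul : Set X → Set X → Set X) (one : Set X) (star : Set X → Set X)
    (hassoc : ∀ a b c, mul (mul a b) c = mul a (mul b c))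
    (hdist₁ : ∀ (s : Set (Set X)) (b), mul (⋃₀ s) b = ⋃ a ∈ s, mul a b)
    (hdist₂ : ∀ (a) (s : Set (Set X)), mul a (⋃₀ s) = ⋃ b ∈ s, mul a b)
    (hone₁ : ∀ a, mul one a = a) (hone₂ : ∀ a, mul a one = a)
    (hstar_mono : ∀ a b, a ⊆ b → star a ⊆ star b)
    (hstar_inv : ∀ a, star (star a) = a)
    (hstar_mul : ∀ a b, star (mul a b) = mul (star b) (star a))
    (hmod : ∀ a b c, a ∩ mul b c ⊆ mul (mul a (star c) ∩ b) c) :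
    ∀ q : X, ∃! e : X, {e} ⊆ one ∧ mul {e} {q} = {q} := by
  -- monotonicity in the first argument
  have hmono₁ : ∀ a b c : Set X, a ⊆ b → mul a c ⊆ mul b c := by
    intro a b c hab
    have h : ⋃₀ ({a, b} : Set (Set X)) = b := by
      simp [Set.union_eq_self_of_subset_left hab]
    have hd := hdist₁ {a, b} c
    rw [h] at hd
    rw [hd]
    intro x hx
    simp only [Set.mem_iUnion]
    exact ⟨a, Or.inl rfl, hx⟩
  have hmono₂ : ∀ a b c : Set X, a ⊆ b → mul c a ⊆ mul c b := by
    intro a b c hab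
    have h : ⋃₀ ({a, b} : Set (Set X)) = b := by
      simp [Set.union_eq_self_of_subset_left hab]
    have hd := hdist₂ c {a, b}
    rw [h] at hd
    rw [hd]
    intro x hx
    simp only [Set.mem_iUnion]
    exact ⟨a, Or.inl rfl, hx⟩
  have hempty : ∀ b, mul ∅ b = ∅ := by
    intro b
    have hd := hdist₁ ∅ b
    simpa using hd
  have hstar_one : star one = one := by
    have h1 : mul one (star one) = star one := hone₁ _
    have h2 := hstar_mul one (star one)
    rw [h1, hstar_inv] at h2
    rw [h1] at h2
    exact h2.symm
  -- product of subidentity singletons is intersection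
  have hsub : ∀ e e' : X, ({e} : Set X) ⊆ one → ({e'} : Set X) ⊆ one →
      mul {e} {e'} = ({e} ∩ {e'} : Set X) := by
    intro e e' he he'
    apply Set.Subset.antisymm
    · intro x hx
      constructor
      · have : mul {e} {e'} ⊆ mul {e} one := hmono₂ _ _ _ he'
        rw [hone₂] at this
        exact this hx
      · have : mul {e} {e'} ⊆ mul one {e'} := hmono₁ _ _ _ he
        rw [hone₁] at this
        exact this hx
    · have h := hmod {e} one {e'}
      rw [hone₁] at h
      refine h.trans ?_
      apply hmono₁
      intro x hx
      have h1 : mul {e} (star {e'}) ⊆ {e} := by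
        have hs : star ({e'} : Set X) ⊆ one := by
          have := hstar_mono _ _ he'
          rwa [hstar_one] at this
        have := hmono₂ _ _ ({e} : Set X) hs
        rwa [hone₂] at this
      exact h1 hx.1
  intro q
  -- existence
  have hone_union : ⋃₀ ((fun x => ({x} : Set X)) '' one) = one := by
    ext x; simp
  have hd := hdist₁ ((fun x => ({x} : Set X)) '' one) {q}
  rw [hone_union, hone₁] at hd
  have hqmem : q ∈ ⋃ a ∈ ((fun x => ({x} : Set X)) '' one), mul a {q} := by
    rw [← hd]; exact rfl
  simp only [Set.mem_iUnion, Set.mem_image] at hqmem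
  obtain ⟨a, ⟨e, heone, rfl⟩, hqa⟩ := hqmem
  have heq : mul {e} {q} = {q} := by
    apply Set.Subset.antisymm
    · have : mul {e} {q} ⊆ mul one {q} := by
        apply hmono₁; simpa using heone
      rwa [hone₁] at this
    · simpa using hqa
  refine ⟨e, ⟨by simpa using heone, heq⟩, ?_⟩
  rintro e' ⟨he', heq'⟩
  by_contra hne
  have h1 : mul {e'} (mul {e} {q}) = {q} := by rw [heq, heq']
  rw [← hassoc, hsub e' e he' (by simpa using heone)] at h1
  have : ({e'} ∩ {e} : Set X) = ∅ := by
    ext x; simp only [Set.mem_inter_iff, Set.mem_singleton_iff, Set.mem_empty_iff_false,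
      iff_false, not_and]
    rintro rfl; exact hne
  rw [this, hempty] at h1
  exact absurd h1.symm (by simp)
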